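/- The prepend operation preserves definitiveness: if X is a definitive set of traces, then ▷X = {t | drop t 1 ∈ X} is also definitive. -/

import Mathlib

/-- A trace is a finite list of states or an infinite stream of states. -/
def Trace (σ : Type) := List σ ⊕ (ℕ → σ)

namespace Trace

variable {σ : Type}

/-- Concatenation of traces; if the first is infinite, the result is the first. -/
def app : Trace σ → Trace σ → Trace σ
  | Sum.inl l, Sum.inl l' => Sum.inl (l ++ l')
  | Sum.inl l, Sum.inr s =>
      Sum.inr (fun n => if h : n < l.length then l.get ⟨n, h⟩ else s (n - l.length))
  | Sum.inr s, _ => Sum.inr s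

instance : Append (Trace σ) := ⟨app⟩

/-- The empty trace ε. -/
def eps : Trace σ := Sum.inl []

/-- A trace is infinite iff it is a stream. -/
def Inf (t : Trace σ) : Prop := t.isRight

/-- Drop the first state of a trace. -/
def drop1 : Trace σ → Trace σ
  | Sum.inl [] => Sum.inl []
  | Sum.inl (_ :: l) => Sum.inl l
  | Sum.inr s => Sum.inr (fun n => s (n + 1))

/-- Drop the first `n` states of a trace. -/
def drop (t : Trace σ) (n : ℕ) : Trace σ := drop1^[n] t

/-- The first state of a trace, if any. -/
def head? : Trace σ → Option σ
  | Sum.inl [] => none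
  | Sum.inl (a :: _) => some a
  | Sum.inr s => some (s 0)

/-- The set of prefixes of a trace. -/
def pre (t : Trace σ) : Set (Trace σ) := {u | ∃ v, t = u ++ v}

/-- The set of prefixes of traces in a set: ↓X. -/
def preS (X : Set (Trace σ)) : Set (Trace σ) := ⋃ t ∈ X, pre t

/-- The set of extensions of a trace: ↑t. -/
def ext (t : Trace σ) : Set (Trace σ) := {u | ∃ v, u = t ++ v}

/-- The definitive prefixes of a set of traces: ↯X. -/
def dp (X : Set (Trace σ)) : Set (Trace σ) := {t | ext t ⊆ preS X}

/-- A set of traces is definitive iff it equals its own set of definitive prefixes. -/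
def Definitive (X : Set (Trace σ)) : Prop := X = dp X

/-- Definitive union ⩁ of a collection of trace sets. -/
def dUnionS (S : Set (Set (Trace σ))) : Set (Trace σ) := dp (⋃₀ S)

/-- Binary / indexed definitive union. -/
def dUnion (X Y : Set (Trace σ)) : Set (Trace σ) := dp (X ∪ Y)

def dUnionI {ι : Sort*} (X : ι → Set (Trace σ)) : Set (Trace σ) := dp (⋃ i, X i)

/-- The prepend operation ▷X. -/
def prepend (X : Set (Trace σ)) : Set (Trace σ) := {t | t.drop 1 ∈ X}

/-- Σ^ω, the set of infinite traces. -/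
def omegaSet (σ : Type) : Set (Trace σ) := {t | t.Inf}

/-- The first state of a trace, with the empty state as default. -/
def st0 {A : Type} (t : Trace (Set A)) : Set A := (t.head?).getD ∅

end Trace

/-- Syntax of LTL formulae over atomic propositions `A`. -/
inductive LTL (A : Type) where
  | top : LTL A
  | atom : A → LTL A
  | neg : LTL A → LTL A
  | and : LTL A → LTL A → LTL A
  | next : LTL A → LTL A
  | until_ : LTL A → LTL A → LTL A

namespace LTL

variable {A : Type}

open Trace

/-- Conventional LTL satisfaction on (infinite) traces. -/
def Sat : Trace (Set A) → LTL A → Prop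
  | t, .top => True
  | t, .atom a => a ∈ t.st0
  | t, .neg φ => ¬ Sat t φ
  | t, .and φ ψ => Sat t φ ∧ Sat t ψ
  | t, .next φ => Sat (t.drop 1) φ
  | t, .until_ φ ψ => ∃ i, Sat (t.drop i) ψ ∧ ∀ j < i, Sat (t.drop j) φ

/-- Answer-indexed family semantics of conventional LTL (sets of infinite traces). -/
def sem : LTL A → Bool → Set (Trace (Set A))
  | .top, true => omegaSet (Set A)
  | .top, false => ∅
  | .atom a, true => {t | t.Inf ∧ a ∈ t.st0}
  | .atom a, false => {t | t.Inf ∧ a ∉ t.st0}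
  | .neg φ, b => sem φ (!b)
  | .and φ ψ, true => sem φ true ∩ sem ψ true
  | .and φ ψ, false => sem φ false ∪ sem ψ false
  | .next φ, b => {t | t.drop 1 ∈ sem φ b}
  | .until_ φ ψ, true => {t | ∃ k, (∀ i < k, t.drop i ∈ sem φ true) ∧ t.drop k ∈ sem ψ true}
  | .until_ φ ψ, false => {t | ∀ k, (∃ i < k, t.drop i ∈ sem φ false) ∨ t.drop k ∈ sem ψ false}

/-- Answer-indexed family semantics of LTL₃ (definitive sets of finite-or-infinite traces). -/
def sem3 : LTL A → Bool → Set (Trace (Set A))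
  | .top, true => Set.univ
  | .top, false => ∅
  | .atom a, true => dp {t | t ≠ eps ∧ a ∈ t.st0}
  | .atom a, false => dp {t | t ≠ eps ∧ a ∉ t.st0}
  | .neg φ, b => sem3 φ (!b)
  | .and φ ψ, true => sem3 φ true ∩ sem3 ψ true
  | .and φ ψ, false => dUnion (sem3 φ false) (sem3 ψ false)
  | .next φ, b => prepend (sem3 φ b)
  | .until_ φ ψ, true =>
      dUnionI (fun k => (fun X => prepend X ∩ sem3 φ true)^[k] (sem3 ψ true))
  | .until_ φ ψ, false =>
      ⋂ k, (fun X => dUnion (prepend X) (sem3 φ false))^[k] (sem3 ψ false)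

end LTL

namespace Trace

variable {σ : Type}

/-- Prepend a single state to a trace. -/
def cons (a : σ) : Trace σ → Trace σ
  | Sum.inl l => Sum.inl (a :: l)
  | Sum.inr s => Sum.inr (fun n => Nat.rec a (fun m _ => s m) n)

lemma drop1_cons (a : σ) (t : Trace σ) : drop1 (cons a t) = t := by
  cases t with
  | inl l => rfl
  | inr s => simp only [cons, drop1]; rfl

lemma eps_app (v : Trace σ) : (eps : Trace σ) ++ v = v := by
  cases v with
  | inl l => rfl
  | inr s =>
      show Trace.app _ _ = _
      simp only [eps, app]
      congr 1

lemma app_eps (t : Trace σ) : t ++ (eps : Trace σ) = t := by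
  cases t with
  | inl l => show Trace.app _ _ = _; simp [app, eps]; rfl
  | inr s => rfl

lemma cons_app (a : σ) (t v : Trace σ) : cons a t ++ v = cons a (t ++ v) := by
  cases t with
  | inl l =>
      cases v with
      | inl l' => rfl
      | inr s =>
          show Trace.app _ _ = cons a (Trace.app _ _)
          simp only [app, cons]
          congr 1
          funext n
          cases n with
          | zero => simp
          | succ m =>
              simp only [List.length_cons]
              by_cases h : m < l.length
              · simp [Nat.succ_lt_succ h, h]
              · simp [h, Nat.succ_lt_succ_iff, Nat.succ_sub_succ]
  | inr s =>
      show Trace.app _ _ = cons a (Trace.app _ _)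
      simp only [cons, app]
      rfl

lemma eps_or_cons (t : Trace σ) : t = eps ∨ ∃ a t', t = cons a t' := by
  cases t with
  | inl l =>
      cases l with
      | nil => exact Or.inl rfl
      | cons a l => exact Or.inr ⟨a, Sum.inl l, rfl⟩
  | inr s =>
      refine Or.inr ⟨s 0, Sum.inr (fun n => s (n + 1)), ?_⟩
      simp only [cons]
      congr 1
      funext n
      cases n <;> rfl

lemma drop_one (t : Trace σ) : t.drop 1 = drop1 t := by
  simp [drop]

lemma mem_dp {Y : Set (Trace σ)} {t : Trace σ} :
    t ∈ dp Y ↔ ∀ v, ∃ w ∈ Y, ∃ z, w = (t ++ v) ++ z := by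
  constructor
  · intro h v
    have : t ++ v ∈ preS Y := h ⟨v, rfl⟩
    simp only [preS, Set.mem_iUnion, pre, Set.mem_setOf_eq] at this
    obtain ⟨w, hw, z, hz⟩ := this
    exact ⟨w, hw, z, hz⟩
  · intro h u hu
    obtain ⟨v, rfl⟩ := hu
    obtain ⟨w, hw, z, hz⟩ := h v
    simp only [preS, Set.mem_iUnion, pre, Set.mem_setOf_eq]
    exact ⟨w, hw, z, hz⟩

end Trace

theorem prepend_definitive {σ : Type} (X : Set (Trace σ))
    (hX : Trace.Definitive X) : Trace.Definitive (Trace.prepend X) := by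
  have hX' : X = Trace.dp X := hX
  ext t
  simp only [Trace.prepend, Set.mem_setOf_eq, Trace.drop_one]
  rw [Trace.mem_dp]
  constructor
  · -- forward
    intro h v
    rcases Trace.eps_or_cons t with rfl | ⟨a, t', rfl⟩
    · -- t = eps
      have heps : Trace.eps ∈ X := by exact h
      rcases Trace.eps_or_cons v with rfl | ⟨b, v', rfl⟩
      · refine ⟨Trace.eps, ?_, Trace.eps, by simp [Trace.app_eps]⟩
        show Trace.drop1 Trace.eps ∈ X
        exact heps
      · have : Trace.eps ∈ Trace.dp X := hX' ▸ heps
        obtain ⟨u, hu, z, hz⟩ := (Trace.mem_dp).1 this v'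
        rw [Trace.eps_app] at hz
        refine ⟨Trace.cons b u, ?_, z, ?_⟩
        · simp [Trace.prepend, Trace.drop_one, Trace.drop1_cons, hu]
        · rw [Trace.eps_app, Trace.cons_app, hz]
    · -- t = cons a t'
      have ht' : t' ∈ X := by rwa [Trace.drop1_cons] at h
      have : t' ∈ Trace.dp X := hX' ▸ ht'
      obtain ⟨u, hu, z, hz⟩ := (Trace.mem_dp).1 this v
      refine ⟨Trace.cons a u, ?_, z, ?_⟩
      · simp [Trace.prepend, Trace.drop_one, Trace.drop1_cons, hu]
      · rw [Trace.cons_app, hz, Trace.cons_app]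
  · -- backward
    intro h
    rcases Trace.eps_or_cons t with rfl | ⟨a, t', rfl⟩
    · -- t = eps : show drop1 eps = eps ∈ X
      show Trace.eps ∈ X
      rw [hX', Trace.mem_dp]
      intro v
      rcases Trace.eps_or_cons v with rfl | ⟨b, v', rfl⟩
      · obtain ⟨w, hw, z, hz⟩ := h Trace.eps
        refine ⟨Trace.drop1 w, ?_, Trace.drop1 w, by simp [Trace.eps_app]⟩
        simpa [Trace.prepend, Trace.drop_one] using hw
      · obtain ⟨w, hw, z, hz⟩ := h (Trace.cons b (Trace.cons b v'))
        rw [Trace.eps_app, Trace.cons_app] at hz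
        have hw' : Trace.drop1 w ∈ X := by
          simpa [Trace.prepend, Trace.drop_one] using hw
        rw [hz, Trace.drop1_cons] at hw'
        exact ⟨Trace.cons b v' ++ z, hw', z, by rw [Trace.eps_app]⟩
    · -- t = cons a t'
      show Trace.drop1 (Trace.cons a t') ∈ X
      rw [Trace.drop1_cons, hX', Trace.mem_dp]
      intro v
      obtain ⟨w, hw, z, hz⟩ := h v
      rw [Trace.cons_app] at hz
      have hw' : Trace.drop1 w ∈ X := by
        simpa [Trace.prepend, Trace.drop_one] using hw
      rw [hz, Trace.cons_app, Trace.drop1_cons] at hw'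
      exact ⟨(t' ++ v) ++ z, hw', z, rfl⟩
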